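/- For every natural number n and every natural number k ≥ 1, (2/π) · ∫_0^{π/2} sin(2 k x) · (cos x)^n · sin(n x) dx = C(n,k) · (1/2)^{n+1}, where C(n,k) is the binomial coefficient (equal to 0 when k > n). -/

import Mathlib

open Real Finset in
theorem aux_expand (n : ℕ) (x : ℝ) :
    (Real.cos x)^n * Real.sin (n*x) * 2^n
      = ∑ j ∈ Finset.range (n+1), (n.choose j : ℝ) * Real.sin (2*j*x) := by
  have h2 : Complex.exp (2*x*Complex.I) + 1
      = 2 * (Real.cos x : ℂ) * Complex.exp (x*Complex.I) := by
    have hc : (Real.cos x : ℂ) = Complex.cos x := by simp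
    rw [hc, Complex.cos]
    have h0 : Complex.exp (x*Complex.I) * Complex.exp (-x*Complex.I) = 1 := by
      rw [← Complex.exp_add]; simp
    have h00 : Complex.exp (x*Complex.I) * Complex.exp (x*Complex.I)
        = Complex.exp (2*x*Complex.I) := by
      rw [← Complex.exp_add]; ring_nf
    linear_combination -h00 - h0
  have h1 : (∑ j ∈ Finset.range (n+1), (n.choose j : ℂ) * Complex.exp (2*j*x*Complex.I))
      = ((2:ℂ) * (Real.cos x : ℂ))^n * Complex.exp (n*(x*Complex.I)) := by
    have hb := add_pow (Complex.exp (2*x*Complex.I)) 1 n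
    rw [h2, mul_pow, ← Complex.exp_nat_mul] at hb
    rw [hb]
    apply Finset.sum_congr rfl
    intro j hj
    rw [← Complex.exp_nat_mul]
    ring_nf
  have h3 := congrArg Complex.im h1
  rw [Complex.im_sum] at h3
  have hL : ∀ j ∈ Finset.range (n+1),
      ((n.choose j : ℂ) * Complex.exp (2*j*x*Complex.I)).im
        = (n.choose j : ℝ) * Real.sin (2*j*x) := by
    intro j _
    rw [show (2*(j:ℂ)*x*Complex.I) = ((2*j*x : ℝ):ℂ)*Complex.I by push_cast; ring]
    simp only [Complex.mul_im, Complex.natCast_re, Complex.natCast_im,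
      Complex.exp_ofReal_mul_I_im, Complex.exp_ofReal_mul_I_re, zero_mul, add_zero]
  rw [Finset.sum_congr rfl hL] at h3
  rw [show ((2:ℂ) * (Real.cos x : ℂ))^n * Complex.exp (n*(x*Complex.I))
      = (((2*Real.cos x)^n : ℝ):ℂ) * Complex.exp (((n*x : ℝ):ℂ)*Complex.I) by push_cast; ring] at h3
  simp only [Complex.mul_im, Complex.ofReal_re, Complex.ofReal_im,
    Complex.exp_ofReal_mul_I_im, Complex.exp_ofReal_mul_I_re, zero_mul, add_zero] at h3
  rw [h3]; ring

open Real in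
theorem aux_cos_int (c : ℝ) (hc : c ≠ 0) :
    ∫ x in (0:ℝ)..(π/2), Real.cos (c*x) = Real.sin (c*(π/2)) / c := by
  rw [intervalIntegral.integral_comp_mul_left Real.cos hc]
  simp [integral_cos, div_eq_inv_mul]

open Real in
theorem aux_orth (j k : ℕ) (hk : 1 ≤ k) :
    ∫ x in (0:ℝ)..(π/2), Real.sin (2*k*x) * Real.sin (2*j*x)
      = if j = k then π/4 else 0 := by
  have hint : ∀ x : ℝ, Real.sin (2*k*x) * Real.sin (2*j*x)
      = (Real.cos ((2*(k:ℝ)-2*j)*x) - Real.cos ((2*(k:ℝ)+2*j)*x)) / 2 := by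
    intro x
    have := Real.two_mul_sin_mul_sin (2*k*x) (2*j*x)
    rw [show (2*(k:ℝ)*x - 2*j*x) = (2*(k:ℝ)-2*j)*x by ring,
        show (2*(k:ℝ)*x + 2*j*x) = (2*(k:ℝ)+2*j)*x by ring] at this
    linarith
  simp only [hint]
  rw [intervalIntegral.integral_div]
  rw [intervalIntegral.integral_sub (by apply Continuous.intervalIntegrable; fun_prop)
      (by apply Continuous.intervalIntegrable; fun_prop)]
  have hk' : (1:ℝ) ≤ (k:ℝ) := by exact_mod_cast hk
  have hj' : (0:ℝ) ≤ (j:ℝ) := Nat.cast_nonneg j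
  have hsum : (2*(k:ℝ)+2*j) ≠ 0 := by intro hh; linarith
  have hs2 : Real.sin ((2*(k:ℝ)+2*j)*(π/2)) = 0 := by
    rw [show (2*(k:ℝ)+2*j)*(π/2) = ((((k:ℤ)+(j:ℤ) : ℤ)) : ℝ) * π by push_cast; ring]
    exact Real.sin_int_mul_pi ((k:ℤ)+(j:ℤ))
  by_cases h : j = k
  · subst h
    rw [if_pos rfl]
    simp only [sub_self, zero_mul]
    rw [aux_cos_int _ hsum, hs2]
    simp [Real.cos_zero]
    ring
  · rw [if_neg h]
    have hdiff : (2*(k:ℝ)-2*j) ≠ 0 := by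
      intro hh
      apply h
      have : (k:ℝ) = j := by linarith
      exact_mod_cast this.symm
    have hs1 : Real.sin ((2*(k:ℝ)-2*j)*(π/2)) = 0 := by
      rw [show (2*(k:ℝ)-2*j)*(π/2) = ((((k:ℤ)-(j:ℤ) : ℤ)) : ℝ) * π by push_cast; ring]
      exact Real.sin_int_mul_pi ((k:ℤ)-(j:ℤ))
    rw [aux_cos_int _ hdiff, aux_cos_int _ hsum, hs1, hs2]
    simp

open Real in
theorem statement_8 (n k : ℕ) (hk : 1 ≤ k) :
    (2 / π) * ∫ x in (0 : ℝ)..(π / 2),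
        Real.sin (2 * k * x) * (Real.cos x) ^ n * Real.sin (n * x) =
      (n.choose k : ℝ) * (1 / 2) ^ (n + 1) := by
  have h2n : (2:ℝ)^n ≠ 0 := by positivity
  have hpt : ∀ x : ℝ, Real.sin (2*k*x) * (Real.cos x)^n * Real.sin (n*x)
      = ∑ j ∈ Finset.range (n+1),
          (n.choose j : ℝ)/2^n * (Real.sin (2*k*x) * Real.sin (2*j*x)) := by
    intro x
    have h := aux_expand n x
    rw [show (∑ j ∈ Finset.range (n+1),
          (n.choose j : ℝ)/2^n * (Real.sin (2*k*x) * Real.sin (2*j*x)))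
        = Real.sin (2*k*x) * (∑ j ∈ Finset.range (n+1),
            (n.choose j : ℝ) * Real.sin (2*j*x)) / 2^n by
      rw [Finset.mul_sum, Finset.sum_div]
      apply Finset.sum_congr rfl
      intro j _
      ring]
    rw [← h]
    field_simp
  simp only [hpt]
  rw [intervalIntegral.integral_finset_sum (fun j _ => by
    apply Continuous.intervalIntegrable; fun_prop)]
  have hterm : ∀ j ∈ Finset.range (n+1),
      (∫ x in (0:ℝ)..(π/2),
        (n.choose j : ℝ)/2^n * (Real.sin (2*k*x) * Real.sin (2*j*x)))
      = if j = k then (n.choose j : ℝ)/2^n * (π/4) else 0 := by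
    intro j _
    rw [intervalIntegral.integral_const_mul, aux_orth j k hk]
    split_ifs with h <;> simp
  rw [Finset.sum_congr rfl hterm]
  rw [Finset.sum_ite_eq' (Finset.range (n+1)) k (fun j => (n.choose j : ℝ)/2^n * (π/4))]
  by_cases hkn : k ∈ Finset.range (n+1)
  · rw [if_pos hkn]
    field_simp
    have hh : ((1:ℝ)/2)^n * 2^n = 1 := by rw [← mul_pow]; norm_num
    linear_combination (-(n.choose k : ℝ)*2) * hh
  · rw [if_neg hkn]
    have : n.choose k = 0 := Nat.choose_eq_zero_of_lt (by
      simpa [Finset.mem_range, Nat.lt_succ_iff, not_le] using hkn)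
    simp [this]
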